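/- A finite-dimensional regular Lie algebra over an infinite field that is not semisimple (i.e., has a nonzero solvable radical) is nilpotent. -/

import Mathlib

/-- A finite-dimensional regular Lie algebra over an infinite field that is not semisimple
(i.e. has a nonzero solvable radical) is nilpotent. -/
theorem regular_not_semisimple_isNilpotent
    (K L : Type*) [Field K] [Infinite K] [LieRing L] [LieAlgebra K L]
    [Module.Finite K L]
    (hreg : ∀ x : L, x ≠ 0 → LieAlgebra.IsRegular K x)
    (hrad : LieAlgebra.radical K L ≠ ⊥) :
    LieRing.IsNilpotent L := by
  classical
  set A := LieAlgebra.derivedAbelianOfIdeal (LieAlgebra.radical K L) with hA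
  have habA : IsLieAbelian A := LieAlgebra.abelian_derivedAbelianOfIdeal _
  have hAne : A ≠ ⊥ := fun h =>
    hrad ((LieAlgebra.abelian_of_solvable_ideal_eq_bot_iff _).mp h)
  -- pick a nonzero element of A
  rw [ne_eq, LieSubmodule.eq_bot_iff] at hAne
  push_neg at hAne
  obtain ⟨x, hx, hx0⟩ := hAne
  -- ad x squares to zero
  have h2 : ∀ y : L, ⁅x, ⁅x, y⁆⁆ = 0 := by
    intro y
    have hyx : ⁅y, x⁆ ∈ A := A.lie_mem hx
    have hxy : ⁅x, y⁆ ∈ A := by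
      rw [← lie_skew]
      exact A.neg_mem hyx
    have h0 : (⁅(⟨x, hx⟩ : A), (⟨⁅x, y⁆, hxy⟩ : A)⁆ : A) = 0 := trivial_lie_zero _ _ _ _
    calc ⁅x, ⁅x, y⁆⁆ = ((⁅(⟨x, hx⟩ : A), (⟨⁅x, y⁆, hxy⟩ : A)⁆ : A) : L) := rfl
      _ = 0 := by rw [h0]; rfl
  have hnil : IsNilpotent (LieAlgebra.ad K L x) := by
    refine ⟨2, ?_⟩
    ext y
    simp [pow_two, LieAlgebra.ad_apply, h2]
  have hcp := hnil.charpoly_eq_X_pow_finrank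
  have hrank : LieAlgebra.rank K L = Module.finrank K L := by
    have h := (LieAlgebra.isRegular_iff_natTrailingDegree_charpoly_eq_rank K x).mp (hreg x hx0)
    rw [hcp, Polynomial.natTrailingDegree_X_pow] at h
    exact h.symm
  rw [LieAlgebra.isNilpotent_iff_forall (R := K)]
  intro y
  have h1 : LieAlgebra.rank K L ≤ (LieAlgebra.ad K L y).charpoly.natTrailingDegree :=
    LieAlgebra.rank_le_natTrailingDegree_charpoly_ad K y
  have h2 : (LieAlgebra.ad K L y).charpoly.natTrailingDegree ≤ Module.finrank K L := by
    rw [← (LieAlgebra.ad K L y).charpoly_natDegree]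
    exact Polynomial.natTrailingDegree_le_natDegree _
  exact ((LinearMap.charpoly_nilpotent_tfae (LieAlgebra.ad K L y)).out 3 0).mp
    (le_antisymm h2 (hrank ▸ h1))
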